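/- Let A ∈ SL₂(ℤ) be hyperbolic with real eigenvalues ε, ε⁻¹ where |ε| > 1. Then there exists a constant c > 0 such that gcd(A^k - I) ≥ c·|ε|^{k/2} for all positive integers k, where gcd(A^k - I) denotes the greatest common divisor of the entries of A^k - I. -/

import Mathlib

open Polynomial

/-- The gcd of the entries of an integer matrix. -/
def matGcd {r : ℕ} (B : Matrix (Fin r) (Fin r) ℤ) : ℕ :=
  Finset.univ.gcd fun p : Fin r × Fin r => (B p.1 p.2).natAbs

lemma matGcd_dvd {r : ℕ} (B : Matrix (Fin r) (Fin r) ℤ) (i j : Fin r) :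
    (matGcd B : ℤ) ∣ B i j := by
  have h1 : matGcd B ∣ (B i j).natAbs :=
    Finset.gcd_dvd (Finset.mem_univ ((i, j) : Fin r × Fin r))
  exact Int.dvd_natAbs.mp (Int.natCast_dvd_natCast.mpr h1)

lemma dvd_matGcd {r : ℕ} (B : Matrix (Fin r) (Fin r) ℤ) (n : ℕ) (h : ∀ i j, (n : ℤ) ∣ B i j) :
    n ∣ matGcd B := by
  refine Finset.dvd_gcd fun p _ => ?_
  exact Int.natCast_dvd_natCast.mp (Int.dvd_natAbs.mpr (h p.1 p.2))

lemma matGcd_smul {r : ℕ} (n : ℤ) (B : Matrix (Fin r) (Fin r) ℤ) :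
    matGcd (n • B) = n.natAbs * matGcd B := by
  unfold matGcd
  have h : (fun p : Fin r × Fin r => ((n • B) p.1 p.2).natAbs)
      = fun p => n.natAbs * (B p.1 p.2).natAbs := by
    funext p; simp [Int.natAbs_mul]
  rw [h, Finset.gcd_mul_left]
  simp

lemma sq_fin_two (A : Matrix (Fin 2) (Fin 2) ℤ) (hdet : A.det = 1) :
    A ^ 2 = A.trace • A - 1 := by
  have hdet' : A 0 0 * A 1 1 - A 0 1 * A 1 0 = 1 := by
    rw [← Matrix.det_fin_two]; exact hdet
  rw [Matrix.eta_fin_two A]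
  ext i j
  fin_cases i <;> fin_cases j <;>
    simp [pow_two, Matrix.mul_fin_two, Matrix.trace_fin_two_of, Matrix.one_apply,
      Matrix.smul_apply, smul_eq_mul] <;>
    (first
      | linear_combination hdet'
      | linear_combination -hdet'
      | linear_combination 2*hdet'
      | linear_combination (-2)*hdet'
      | ring)

lemma trace_pow_eq (A : Matrix (Fin 2) (Fin 2) ℤ) (hdet : A.det = 1)
    (ε : ℝ) (hε0 : ε ≠ 0) (ht : (A.trace : ℝ) = ε + ε⁻¹) :
    ∀ k : ℕ, ((A ^ k).trace : ℝ) = ε ^ k + ε⁻¹ ^ k := by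
  have h2 : A ^ 2 = A.trace • A - 1 := sq_fin_two A hdet
  have key : ∀ k : ℕ, (A ^ (k + 2)).trace = A.trace * (A ^ (k + 1)).trace - (A ^ k).trace := by
    intro k
    have h3 : A ^ (k + 2) = A.trace • A ^ (k + 1) - A ^ k := by
      rw [pow_add, h2, mul_sub, mul_one, Matrix.mul_smul, ← pow_succ]
    rw [h3, Matrix.trace_sub, Matrix.trace_smul]
    simp [smul_eq_mul]
  have main : ∀ k : ℕ, ((A ^ k).trace : ℝ) = ε ^ k + ε⁻¹ ^ k ∧
      ((A ^ (k + 1)).trace : ℝ) = ε ^ (k + 1) + ε⁻¹ ^ (k + 1) := by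
    intro k
    induction k with
    | zero =>
      constructor
      · simp [Matrix.trace_one]; norm_num
      · simpa using ht
    | succ n ih =>
      refine ⟨ih.2, ?_⟩
      have hc : ((A ^ (n + 2)).trace : ℝ)
          = (A.trace : ℝ) * ((A ^ (n + 1)).trace : ℝ) - ((A ^ n).trace : ℝ) := by
        exact_mod_cast congrArg (Int.cast : ℤ → ℝ) (key n)
      rw [show n + 1 + 1 = n + 2 from rfl, hc, ht, ih.1, ih.2]
      linear_combination (ε ^ n + ε⁻¹ ^ n) * mul_inv_cancel₀ hε0
  exact fun k => (main k).1

lemma comm_decomp (a b c e g b₀ c₀ f₀ xb xc xf p q r s : ℤ)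
    (hg : g ≠ 0) (hb : b = g * b₀) (hc : c = g * c₀) (hf : a - e = g * f₀)
    (hbez : b₀ * xb + c₀ * xc + f₀ * xf = 1)
    (hcomm : !![a,b;c,e] * !![p,q;r,s] = !![p,q;r,s] * !![a,b;c,e]) :
    q = (q*xb + r*xc + (p-s)*xf) * b₀ ∧ r = (q*xb + r*xc + (p-s)*xf) * c₀ ∧
      p = s + (q*xb + r*xc + (p-s)*xf) * f₀ := by
  rw [Matrix.mul_fin_two, Matrix.mul_fin_two] at hcomm
  have h00 : a*p + b*r = p*a + q*c := congrFun (congrFun hcomm 0) 0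
  have h01 : a*q + b*s = p*b + q*e := congrFun (congrFun hcomm 0) 1
  have h10 : c*p + e*r = r*a + s*c := congrFun (congrFun hcomm 1) 0
  have hqr : b₀ * r = q * c₀ := by
    apply mul_left_cancel₀ hg
    linear_combination h00 - r*hb + q*hc
  have hqf : q * f₀ = b₀ * (p - s) := by
    apply mul_left_cancel₀ hg
    linear_combination h01 - q*hf + (p-s)*hb
  have hrf : c₀ * (p - s) = r * f₀ := by
    apply mul_left_cancel₀ hg
    linear_combination h10 - (p-s)*hc + r*hf
  refine ⟨?_, ?_, ?_⟩
  · linear_combination (-q)*hbez - xc*hqr + xf*hqf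
  · linear_combination (-r)*hbez + xb*hqr - xf*hrf
  · linear_combination (-(p-s))*hbez - xb*hqf + xc*hrf

lemma aux_ne (x : ℝ) (hx : 1 < |x|) : x + x⁻¹ - 2 ≠ 0 := by
  have hx0 : x ≠ 0 := by intro h; rw [h] at hx; simp at hx; linarith
  intro h
  have h2 : x ^ 2 + 1 = 2 * x := by
    have := h
    field_simp at this
    linarith
  have h3 : (x - 1) ^ 2 = 0 := by nlinarith
  have h4 : x = 1 := by nlinarith [sq_nonneg (x - 1)]
  rw [h4] at hx; simp at hx

lemma aux_abs (x : ℝ) (hx : 1 < |x|) : |x| - 2 ≤ |x + x⁻¹ - 2| := by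
  have hx0 : x ≠ 0 := by intro h; rw [h] at hx; simp at hx; linarith
  rcases lt_or_gt_of_ne hx0 with hneg | hpos
  · have hi : x⁻¹ < 0 := inv_neg''.mpr hneg
    rw [abs_of_neg hneg, abs_of_neg (by linarith : x + x⁻¹ - 2 < 0)]
    linarith
  · have hi : 0 < x⁻¹ := inv_pos.mpr hpos
    have hge : 0 ≤ x + x⁻¹ - 2 := by
      have h1 : x * x⁻¹ = 1 := mul_inv_cancel₀ hx0
      nlinarith [sq_nonneg (x - 1)]
    rw [abs_of_pos hpos, abs_of_nonneg hge]
    linarith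

set_option maxHeartbeats 1600000 in
theorem stmt_8 (A : Matrix (Fin 2) (Fin 2) ℤ) (hdet : A.det = 1)
    (ε : ℝ) (hε : 1 < |ε|)
    (hchar : (A.map (Int.cast : ℤ → ℝ)).charpoly = (X - C ε) * (X - C ε⁻¹)) :
    ∃ c : ℝ, 0 < c ∧ ∀ k : ℕ, 1 ≤ k →
      c * |ε| ^ ((k : ℝ) / 2) ≤ (matGcd (A ^ k - 1) : ℝ) := by
  have hε0 : ε ≠ 0 := by intro h; rw [h] at hε; simp at hε; linarith
  -- trace of A equals ε + ε⁻¹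
  have htr : ((A.trace : ℤ) : ℝ) = ε + ε⁻¹ := by
    have h1 : (A.map (Int.cast : ℤ → ℝ)).trace = ε + ε⁻¹ := by
      rw [Matrix.trace_eq_neg_charpoly_coeff, hchar]
      have h2 : (X - C ε) * (X - C ε⁻¹) = X^2 - C (ε + ε⁻¹) * X + C (ε * ε⁻¹) := by
        simp [C_add, C_mul]; ring
      rw [h2]
      simp [Fintype.card_fin, coeff_X, coeff_C]
    have h2 : (A.map (Int.cast : ℤ → ℝ)).trace = ((A.trace : ℤ) : ℝ) := by
      simp [Matrix.trace, Matrix.map_apply]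
    rw [← h2, h1]
  -- (trace)^2 > 4 over ℝ
  have hεne : ε - ε⁻¹ ≠ 0 := by
    intro h
    have h1 : ε = ε⁻¹ := by linarith
    have h2 : ε^2 = 1 := by
      field_simp at h1
      nlinarith
    have : |ε|^2 = 1 := by rw [sq_abs]; exact h2
    nlinarith
  have ht4 : (4 : ℝ) < ((A.trace : ℤ) : ℝ)^2 := by
    rw [htr]
    have h1 : ε * ε⁻¹ = 1 := mul_inv_cancel₀ hε0
    nlinarith [sq_pos_of_ne_zero hεne]
  have ht9 : (9 : ℤ) ≤ A.trace^2 := by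
    have h4 : (4 : ℤ) < A.trace^2 := by exact_mod_cast ht4
    rcases le_or_gt 3 A.trace with h3 | h3
    · nlinarith
    rcases le_or_gt A.trace (-3) with h5 | h5
    · nlinarith
    · nlinarith
  have habs : (5/2 : ℝ) ≤ |ε| := by
    have h9 : (9:ℝ) ≤ (ε + ε⁻¹)^2 := by rw [← htr]; exact_mod_cast ht9
    have h3 : (3:ℝ) ≤ |ε + ε⁻¹| := by
      nlinarith [abs_nonneg (ε + ε⁻¹), sq_abs (ε + ε⁻¹)]
    have hle : |ε + ε⁻¹| ≤ |ε| + |ε|⁻¹ := by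
      calc |ε + ε⁻¹| ≤ |ε| + |ε⁻¹| := abs_add_le _ _
        _ = |ε| + |ε|⁻¹ := by rw [abs_inv]
    have h1 : (1:ℝ) < |ε| := hε
    have h2 : (0:ℝ) < |ε| := by linarith
    have h5 : |ε| + |ε|⁻¹ ≥ 3 := le_trans h3 hle
    have h6 : |ε|^2 + 1 ≥ 3 * |ε| := by
      have := mul_le_mul_of_nonneg_left h5 (le_of_lt h2)
      have hinv : |ε| * |ε|⁻¹ = 1 := mul_inv_cancel₀ (ne_of_gt h2)
      nlinarith
    nlinarith [mul_pos (sub_pos.2 h1) h2, sq_nonneg (|ε| - 5/2), sq_nonneg (|ε| - 1)]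
  -- entries of A
  obtain ⟨a, b, c, e, hA⟩ : ∃ a b c e, A = !![a,b;c,e] := ⟨_, _, _, _, Matrix.eta_fin_two A⟩
  have hdet' : a * e - b * c = 1 := by
    rw [hA, Matrix.det_fin_two_of] at hdet; exact hdet
  have htA : A.trace = a + e := by rw [hA, Matrix.trace_fin_two_of]
  -- gcd of off-scalar part
  set g : ℕ := Int.gcd (Int.gcd b c) (a - e) with hgdef
  have hgb : (g:ℤ) ∣ b := dvd_trans (Int.gcd_dvd_left _ _) (Int.gcd_dvd_left _ _)
  have hgc : (g:ℤ) ∣ c := dvd_trans (Int.gcd_dvd_left _ _) (Int.gcd_dvd_right _ _)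
  have hgf : (g:ℤ) ∣ (a - e) := Int.gcd_dvd_right _ _
  have hgne : (g:ℤ) ≠ 0 := by
    intro h0
    have hg0 : g = 0 := by exact_mod_cast h0
    have hbc : Int.gcd b c = 0 ∧ (a - e) = 0 := by
      constructor
      · have := Int.gcd_eq_zero_iff.mp hg0
        exact_mod_cast this.1
      · exact Int.gcd_eq_zero_iff.mp hg0 |>.2
    obtain ⟨hbc0, hae⟩ := hbc
    have hb0 : b = 0 := (Int.gcd_eq_zero_iff.mp hbc0).1
    have hc0 : c = 0 := (Int.gcd_eq_zero_iff.mp hbc0).2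
    have hid : (A.trace)^2 - 4 = (a - e)^2 + 4*(b*c) := by
      rw [htA]; linear_combination 4*hdet'
    rw [hae, hb0, hc0] at hid
    simp at hid
    nlinarith
  obtain ⟨b₀, hb⟩ : ∃ b₀, b = (g:ℤ) * b₀ := ⟨b / g, (Int.mul_ediv_cancel' hgb).symm⟩
  obtain ⟨c₀, hc⟩ : ∃ c₀, c = (g:ℤ) * c₀ := ⟨c / g, (Int.mul_ediv_cancel' hgc).symm⟩
  obtain ⟨f₀, hf⟩ : ∃ f₀, a - e = (g:ℤ) * f₀ := ⟨(a-e) / g, (Int.mul_ediv_cancel' hgf).symm⟩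
  -- Bezout for three
  obtain ⟨xb, xc, xf, hbez⟩ : ∃ xb xc xf, b₀ * xb + c₀ * xc + f₀ * xf = 1 := by
    have h1 : (Int.gcd b c : ℤ) = b * Int.gcdA b c + c * Int.gcdB b c := Int.gcd_eq_gcd_ab b c
    have h2 : (g : ℤ) = (Int.gcd b c : ℤ) * Int.gcdA (Int.gcd b c) (a-e)
        + (a-e) * Int.gcdB (Int.gcd b c) (a-e) := by
      rw [hgdef]; exact_mod_cast Int.gcd_eq_gcd_ab (Int.gcd b c : ℤ) (a-e)
    refine ⟨Int.gcdA b c * Int.gcdA (Int.gcd b c) (a-e),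
            Int.gcdB b c * Int.gcdA (Int.gcd b c) (a-e),
            Int.gcdB (Int.gcd b c) (a-e), ?_⟩
    apply mul_left_cancel₀ hgne
    rw [mul_one]
    symm
    calc (g:ℤ) = (b * Int.gcdA b c + c * Int.gcdB b c) * Int.gcdA (Int.gcd b c) (a-e)
        + (a-e) * Int.gcdB (Int.gcd b c) (a-e) := by rw [← h1]; exact h2
      _ = (g:ℤ) * (b₀ * (Int.gcdA b c * Int.gcdA (Int.gcd b c) (a-e))
            + c₀ * (Int.gcdB b c * Int.gcdA (Int.gcd b c) (a-e))
            + f₀ * Int.gcdB (Int.gcd b c) (a-e)) := by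
          rw [hb, hc] at *
          linear_combination Int.gcdB (Int.gcd ((g:ℤ)*b₀) ((g:ℤ)*c₀)) (a-e) * hf
  -- the constant
  have hΔpos : (0:ℝ) < ((A.trace : ℤ) : ℝ)^2 - 4 := by linarith
  have h5Δ : (0:ℝ) < 5 * (((A.trace : ℤ) : ℝ)^2 - 4) := by linarith
  refine ⟨(Real.sqrt (5 * (((A.trace : ℤ) : ℝ)^2 - 4)))⁻¹,
    inv_pos.2 (Real.sqrt_pos.2 h5Δ), ?_⟩
  intro k hk
  set P : Matrix (Fin 2) (Fin 2) ℤ := A ^ k with hPdef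
  have hdetP : P.det = 1 := by rw [hPdef, Matrix.det_pow, hdet, one_pow]
  set N : ℤ := P.trace - 2 with hNdef
  have htrk : ((P.trace : ℤ) : ℝ) = ε ^ k + ε⁻¹ ^ k := trace_pow_eq A hdet ε hε0 htr k
  have hxabs : 1 < |ε ^ k| := by
    rw [abs_pow]; exact one_lt_pow₀ hε (by omega)
  have hNr : ((N : ℤ) : ℝ) = ε ^ k + (ε ^ k)⁻¹ - 2 := by
    rw [hNdef]; push_cast; rw [htrk, inv_pow]
  have hNne : N ≠ 0 := by
    intro h0
    exact aux_ne (ε ^ k) hxabs (by rw [← hNr, h0]; simp)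
  have hNabs : |ε| ^ k - 2 ≤ |((N : ℤ) : ℝ)| := by
    rw [hNr]
    calc |ε|^k - 2 = |ε ^ k| - 2 := by rw [abs_pow]
      _ ≤ |ε ^ k + (ε ^ k)⁻¹ - 2| := aux_abs _ hxabs
  set B : Matrix (Fin 2) (Fin 2) ℤ := P - 1 with hBdef
  have hsq : P ^ 2 = P.trace • P - 1 := sq_fin_two P hdetP
  have hB2 : B * B = N • P := by
    rw [hBdef, hNdef, sub_mul, one_mul, mul_sub, mul_one, ← pow_two, hsq, sub_smul,
      show ((2:ℤ) • P) = P + P from two_smul ℤ P]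
    abel
  have hBne : B ≠ 0 := by
    intro h0
    rw [h0, mul_zero] at hB2
    have hdd := congrArg Matrix.det hB2
    rw [Matrix.det_zero, Matrix.det_smul, hdetP, mul_one] at hdd
    · exact hNne ((pow_eq_zero_iff (two_ne_zero)).mp hdd.symm)
  set d : ℕ := matGcd B with hddef
  have hdne : d ≠ 0 := by
    intro h0
    apply hBne
    ext i j
    have hdvd := matGcd_dvd B i j
    rw [← hddef, h0] at hdvd
    simpa using hdvd
  have hdz : ((d:ℕ):ℤ) ≠ 0 := by exact_mod_cast hdne
  set B' : Matrix (Fin 2) (Fin 2) ℤ := Matrix.of (fun i j => B i j / (d:ℤ)) with hB'def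
  have hBd : B = (d:ℤ) • B' := by
    ext i j
    rw [hB'def]
    simp only [Matrix.smul_apply, Matrix.of_apply, smul_eq_mul]
    exact (Int.mul_ediv_cancel' (matGcd_dvd B i j)).symm
  have hPcont : matGcd P = 1 := by
    have hd2 : P 0 0 * P 1 1 - P 0 1 * P 1 0 = 1 := by
      rw [← Matrix.det_fin_two]; exact hdetP
    have h1 : (matGcd P : ℤ) ∣ 1 := by
      rw [← hd2]
      exact dvd_sub ((matGcd_dvd P 0 0).mul_right _) ((matGcd_dvd P 0 1).mul_right _)
    exact Nat.dvd_one.mp (by exact_mod_cast h1)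
  have hB'cont : matGcd B' = 1 := by
    have h1 : d * matGcd B' = d * 1 := by
      rw [mul_one]
      conv_rhs => rw [hddef]
      rw [hBd, matGcd_smul]
      simp
    exact (Nat.eq_of_mul_eq_mul_left (Nat.pos_of_ne_zero hdne) h1)
  have hmulNP : N • P = ((d:ℤ)^2) • (B' * B') := by
    rw [← hB2, hBd, Matrix.smul_mul, Matrix.mul_smul, smul_smul, pow_two]
  have hd2N : (d:ℤ)^2 ∣ N := by
    have h1 : matGcd (N • P) = N.natAbs := by rw [matGcd_smul, hPcont, mul_one]
    have h2 : matGcd (N • P) = d^2 * matGcd (B' * B') := by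
      rw [hmulNP, matGcd_smul]
      try congr 1
      try simp [Int.natAbs_pow]
    have h3 : d^2 ∣ N.natAbs := ⟨matGcd (B' * B'), by rw [← h2, h1]⟩
    have h4 : ((d^2 : ℕ) : ℤ) ∣ (N.natAbs : ℤ) := Int.natCast_dvd_natCast.mpr h3
    have h5 : |N| ∣ N := (abs_dvd _ _).mpr dvd_rfl
    push_cast at h4
    exact h4.trans h5
  set m : ℤ := N / (d:ℤ)^2 with hmdef
  have hmN : N = (d:ℤ)^2 * m := (Int.mul_ediv_cancel' hd2N).symm
  have hm0 : m ≠ 0 := fun h => hNne (by rw [hmN, h, mul_zero])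
  have hB'2 : B' * B' = m • P := by
    apply smul_right_injective (Matrix (Fin 2) (Fin 2) ℤ) (pow_ne_zero 2 hdz)
    show ((d:ℤ)^2) • (B' * B') = ((d:ℤ)^2) • (m • P)
    rw [← hmulNP, smul_smul, ← hmN]
  have hAP : A * P = P * A := by
    rw [hPdef]; exact ((Commute.refl A).pow_right k).eq
  have hAB : A * B = B * A := by
    rw [hBdef, mul_sub, sub_mul, mul_one, one_mul, hAP]
  have hAB' : A * B' = B' * A := by
    apply smul_right_injective (Matrix (Fin 2) (Fin 2) ℤ) hdz
    show (d:ℤ) • (A * B') = (d:ℤ) • (B' * A)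
    rw [← Matrix.mul_smul, ← Matrix.smul_mul, ← hBd]
    exact hAB
  obtain ⟨p, q, r, s, hM⟩ : ∃ p q r s, B' = !![p,q;r,s] := ⟨_,_,_,_, Matrix.eta_fin_two B'⟩
  obtain ⟨p₁, q₁, r₁, s₁, hP⟩ : ∃ p₁ q₁ r₁ s₁, P = !![p₁,q₁;r₁,s₁] :=
    ⟨_,_,_,_, Matrix.eta_fin_two P⟩
  obtain ⟨hq, hr, hp⟩ := comm_decomp a b c e (g:ℤ) b₀ c₀ f₀ xb xc xf p q r s hgne hb hc hf hbez
    (by rw [← hA, ← hM]; exact hAB')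
  obtain ⟨hq₁, hr₁, hp₁⟩ := comm_decomp a b c e (g:ℤ) b₀ c₀ f₀ xb xc xf p₁ q₁ r₁ s₁ hgne hb hc hf hbez
    (by rw [← hA, ← hP]; exact hAP)
  set y : ℤ := q*xb + r*xc + (p-s)*xf with hydef
  set y₁ : ℤ := q₁*xb + r₁*xc + (p₁-s₁)*xf with hy₁def
  have hB'2e := hB'2
  rw [hM, hP, Matrix.mul_fin_two] at hB'2e
  have E00 : p*p + q*r = m * p₁ := by
    have h := congrFun (congrFun hB'2e 0) 0; simpa using h
  have E01 : p*q + q*s = m * q₁ := by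
    have h := congrFun (congrFun hB'2e 0) 1; simpa using h
  have E10 : r*p + s*r = m * r₁ := by
    have h := congrFun (congrFun hB'2e 1) 0; simpa using h
  have E11 : r*q + s*s = m * s₁ := by
    have h := congrFun (congrFun hB'2e 1) 1; simpa using h
  have hstar1 : m ∣ s^2 + y^2*(b₀*c₀) := by
    refine ⟨s₁, ?_⟩
    have E11a := E11
    rw [hq, hr] at E11a
    linear_combination E11a
  have hstar2 : y * (2*s + y*f₀) = m * y₁ := by
    by_cases hb₀ : b₀ = 0
    · by_cases hc₀ : c₀ = 0
      · have hf₀ : f₀ ≠ 0 := by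
          intro h0; rw [hb₀, hc₀, h0] at hbez; simp at hbez
        apply mul_left_cancel₀ hf₀
        have E00a := E00
        have E11a := E11
        rw [hq, hr, hp, hp₁] at E00a
        rw [hq, hr] at E11a
        linear_combination E00a - E11a
      · apply mul_left_cancel₀ hc₀
        have E10a := E10
        rw [hr, hp, hr₁] at E10a
        linear_combination E10a
    · apply mul_left_cancel₀ hb₀
      have E01a := E01
      rw [hq, hp, hq₁] at E01a
      linear_combination E01a
  have hcopsy : IsCoprime s y := by
    rw [Int.isCoprime_iff_gcd_eq_one]
    have hws : ((Int.gcd s y : ℕ):ℤ) ∣ s := Int.gcd_dvd_left _ _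
    have hwy : ((Int.gcd s y : ℕ):ℤ) ∣ y := Int.gcd_dvd_right _ _
    have hdvdall : ∀ i j, ((Int.gcd s y : ℕ) : ℤ) ∣ B' i j := by
      intro i j
      rw [hM]
      fin_cases i <;> fin_cases j <;> simp
      · rw [hp]; exact dvd_add hws (hwy.mul_right f₀)
      · rw [hq]; exact hwy.mul_right b₀
      · rw [hr]; exact hwy.mul_right c₀
      · exact hws
    have h1 := dvd_matGcd B' (Int.gcd s y) hdvdall
    rw [hB'cont] at h1
    exact Nat.dvd_one.mp h1
  have hcopmy : IsCoprime m y := by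
    rw [Int.isCoprime_iff_gcd_eq_one]
    have hwm : ((Int.gcd m y : ℕ):ℤ) ∣ m := Int.gcd_dvd_left _ _
    have hwy : ((Int.gcd m y : ℕ):ℤ) ∣ y := Int.gcd_dvd_right _ _
    have hws2 : ((Int.gcd m y : ℕ):ℤ) ∣ s^2 := by
      have h1 : ((Int.gcd m y : ℕ):ℤ) ∣ s^2 + y^2*(b₀*c₀) := hwm.trans hstar1
      have h2 : ((Int.gcd m y : ℕ):ℤ) ∣ y^2*(b₀*c₀) :=
        hwy.trans ⟨y*(b₀*c₀), by ring⟩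
      have h3 := dvd_sub h1 h2
      simpa using h3
    have hunit : IsUnit ((Int.gcd m y : ℕ):ℤ) :=
      (hcopsy.pow_left).isUnit_of_dvd' hws2 hwy
    rcases Int.isUnit_iff.mp hunit with h1 | h1
    · exact_mod_cast h1
    · exfalso
      have h2 : (0:ℤ) ≤ ((Int.gcd m y : ℕ):ℤ) := Int.natCast_nonneg _
      omega
  have hm3 : m ∣ 2*s + y*f₀ := by
    refine hcopmy.dvd_of_dvd_mul_right ⟨y₁, ?_⟩
    linear_combination hstar2
  have hm4 : m ∣ f₀^2 + 4*(b₀*c₀) := by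
    have h1 : m ∣ y^2*(f₀^2 + 4*(b₀*c₀)) := by
      have heq : y^2*(f₀^2 + 4*(b₀*c₀))
          = 4*(s^2 + y^2*(b₀*c₀)) - (2*s + y*f₀)*(2*s - y*f₀) := by ring
      rw [heq]
      exact dvd_sub (hstar1.mul_left 4) (hm3.mul_right _)
    exact (hcopmy.pow_right).dvd_of_dvd_mul_left h1
  have hD0 : (g:ℤ)^2 * (f₀^2 + 4*(b₀*c₀)) = (A.trace)^2 - 4 := by
    rw [htA]
    linear_combination (-(a - e + (g:ℤ)*f₀))*hf - 4*c*hb - 4*(g:ℤ)*b₀*hc - 4*hdet'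
  have hD0ne : f₀^2 + 4*(b₀*c₀) ≠ 0 := by
    intro h0
    rw [h0, mul_zero] at hD0
    linarith [ht9]
  have hg1 : (1:ℤ) ≤ (g:ℤ) := by
    have : (0:ℤ) ≤ (g:ℤ) := Int.natCast_nonneg _
    omega
  have hmabs : |m| ≤ (A.trace)^2 - 4 := by
    have h1 : |m| ≤ |f₀^2 + 4*(b₀*c₀)| :=
      Int.le_of_dvd (abs_pos.mpr hD0ne) ((abs_dvd _ _).mpr ((dvd_abs _ _).mpr hm4))
    have hg2 : (1:ℤ) ≤ (g:ℤ)^2 := by nlinarith [hg1]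
    have h2 : |f₀^2 + 4*(b₀*c₀)| ≤ (g:ℤ)^2 * |f₀^2 + 4*(b₀*c₀)| :=
      le_mul_of_one_le_left (abs_nonneg _) hg2
    have h3 : (g:ℤ)^2 * |f₀^2 + 4*(b₀*c₀)| = |(g:ℤ)^2 * (f₀^2 + 4*(b₀*c₀))| := by
      rw [abs_mul, abs_of_nonneg (by positivity : (0:ℤ) ≤ (g:ℤ)^2)]
    have h4 : |(A.trace)^2 - 4| = (A.trace)^2 - 4 := abs_of_nonneg (by nlinarith [ht9])
    rw [h3, hD0, h4] at h2
    linarith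
  have hNbound : |N| ≤ (d:ℤ)^2 * ((A.trace)^2 - 4) := by
    rw [hmN, abs_mul]
    have h1 : |(d:ℤ)^2| = (d:ℤ)^2 := abs_of_nonneg (by positivity)
    rw [h1]
    exact mul_le_mul_of_nonneg_left hmabs (by positivity)
  -- real conclusion
  have hcast : |((N:ℤ):ℝ)| ≤ ((d:ℝ))^2 * (((A.trace : ℤ):ℝ)^2 - 4) := by
    rw [← Int.cast_abs]
    have := hNbound
    calc ((|N| : ℤ):ℝ) ≤ (((d:ℤ)^2 * ((A.trace)^2 - 4) : ℤ) : ℝ) := by exact_mod_cast this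
      _ = ((d:ℝ))^2 * (((A.trace : ℤ):ℝ)^2 - 4) := by push_cast; ring
  have hwk : (5/2 : ℝ) ≤ |ε|^k := le_trans habs (le_self_pow₀ (by linarith) (by omega))
  have hgoal2 : |ε|^k / (5 * (((A.trace : ℤ):ℝ)^2 - 4)) ≤ ((d:ℝ))^2 := by
    rw [div_le_iff₀ h5Δ]
    have h1 : |ε|^k - 2 ≤ ((d:ℝ))^2 * (((A.trace : ℤ):ℝ)^2 - 4) := le_trans hNabs hcast
    nlinarith
  have hrw : |ε| ^ ((k:ℝ)/2) = Real.sqrt (|ε|^k) := by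
    rw [show ((k:ℝ)/2) = (k:ℝ) * (1/2) by ring, Real.rpow_mul (abs_nonneg ε),
      Real.rpow_natCast, Real.sqrt_eq_rpow]
  calc (Real.sqrt (5 * (((A.trace : ℤ):ℝ)^2 - 4)))⁻¹ * |ε| ^ ((k:ℝ)/2)
      = Real.sqrt (|ε|^k / (5 * (((A.trace : ℤ):ℝ)^2 - 4))) := by
        rw [hrw, Real.sqrt_div (by positivity), inv_mul_eq_div]
    _ ≤ Real.sqrt (((d:ℝ))^2) := Real.sqrt_le_sqrt hgoal2
    _ = ((d:ℕ):ℝ) := Real.sqrt_sq (Nat.cast_nonneg d)
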